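/- Let p be a prime and suppose for each λ ≥ 0 we define g_λ = (6λ)! / ((2λ)! (3λ)! 2^{3λ} 3^{2λ}), with p ≥ 5 (so p does not divide 6). Then v_p(g_λ) ≥ v_p(λ!) for all λ ≥ 0; in particular v_p(g_λ) → ∞ as λ → ∞. -/

import Mathlib

open Filter in
theorem stmt_9 (p : ℕ) (hp : p.Prime) (hp5 : 5 ≤ p)
    (g : ℕ → ℚ)
    (hg : ∀ lam, g lam = (Nat.factorial (6 * lam) : ℚ) /
        ((Nat.factorial (2 * lam) : ℚ) * (Nat.factorial (3 * lam) : ℚ) *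
          2 ^ (3 * lam) * 3 ^ (2 * lam))) :
    (∀ lam, (padicValNat p (Nat.factorial lam) : ℤ) ≤ padicValRat p (g lam)) ∧
      Tendsto (fun lam => padicValRat p (g lam)) atTop atTop := by
  haveI : Fact p.Prime := ⟨hp⟩
  have hp2 : ¬ p ∣ 2 := fun h => by have := Nat.le_of_dvd (by norm_num) h; omega
  have hp3 : ¬ p ∣ 3 := fun h => by have := Nat.le_of_dvd (by norm_num) h; omega
  -- valuation of g lam
  have hval : ∀ lam, padicValRat p (g lam) =
      (padicValNat p (Nat.factorial (6 * lam)) : ℤ)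
        - padicValNat p (Nat.factorial (2 * lam))
        - padicValNat p (Nat.factorial (3 * lam)) := by
    intro lam
    have f6 : ((Nat.factorial (6 * lam) : ℚ)) ≠ 0 := by
      exact_mod_cast (Nat.factorial_pos _).ne'
    have f2 : ((Nat.factorial (2 * lam) : ℚ)) ≠ 0 := by
      exact_mod_cast (Nat.factorial_pos _).ne'
    have f3 : ((Nat.factorial (3 * lam) : ℚ)) ≠ 0 := by
      exact_mod_cast (Nat.factorial_pos _).ne'
    have t2 : ((2:ℚ)) ≠ 0 := by norm_num
    have t3 : ((3:ℚ)) ≠ 0 := by norm_num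
    have v2 : padicValRat p (2:ℚ) = 0 := by
      have : padicValNat p 2 = 0 := padicValNat.eq_zero_of_not_dvd hp2
      have h2 : ((2:ℚ)) = ((2:ℕ):ℚ) := by norm_num
      rw [h2, padicValRat.of_nat, this]; rfl
    have v3 : padicValRat p (3:ℚ) = 0 := by
      have : padicValNat p 3 = 0 := padicValNat.eq_zero_of_not_dvd hp3
      have h3 : ((3:ℚ)) = ((3:ℕ):ℚ) := by norm_num
      rw [h3, padicValRat.of_nat, this]; rfl
    rw [hg lam, padicValRat.div f6 (by positivity),
      padicValRat.mul (by positivity) (pow_ne_zero _ t3),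
      padicValRat.mul (by positivity) (pow_ne_zero _ t2),
      padicValRat.mul f2 f3, padicValRat.pow (2:ℚ), padicValRat.pow (3:ℚ), v2, v3,
      padicValRat.of_nat, padicValRat.of_nat, padicValRat.of_nat]
    ring
  -- multinomial divisibility
  have hdvd : ∀ lam, Nat.factorial (2 * lam) * Nat.factorial (3 * lam) *
      Nat.factorial lam ∣ Nat.factorial (6 * lam) := by
    intro lam
    have h1 : Nat.factorial (2 * lam) * Nat.factorial (3 * lam) ∣
        Nat.factorial (2 * lam + 3 * lam) :=
      Nat.factorial_mul_factorial_dvd_factorial_add _ _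
    have h2 : Nat.factorial (2 * lam + 3 * lam) * Nat.factorial lam ∣
        Nat.factorial (2 * lam + 3 * lam + lam) :=
      Nat.factorial_mul_factorial_dvd_factorial_add _ _
    have : 2 * lam + 3 * lam + lam = 6 * lam := by ring
    rw [this] at h2
    exact dvd_trans (mul_dvd_mul_right h1 _) h2
  have hmain : ∀ lam, (padicValNat p (Nat.factorial lam) : ℤ) ≤ padicValRat p (g lam) := by
    intro lam
    have hne : Nat.factorial (6 * lam) ≠ 0 := (Nat.factorial_pos _).ne'
    have hle : padicValNat p (Nat.factorial (2 * lam) * Nat.factorial (3 * lam) *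
        Nat.factorial lam) ≤ padicValNat p (Nat.factorial (6 * lam)) :=
      (padicValNat_dvd_iff_le hne).mp (dvd_trans pow_padicValNat_dvd (hdvd lam))
    rw [padicValNat.mul (by positivity) (Nat.factorial_pos _).ne',
      padicValNat.mul (Nat.factorial_pos _).ne' (Nat.factorial_pos _).ne'] at hle
    rw [hval lam]
    omega
  refine ⟨hmain, ?_⟩
  -- lower bound: padicValNat p (lam !) ≥ lam / p
  have hfac : ∀ lam : ℕ, lam / p ≤ padicValNat p (Nat.factorial lam) := by
    intro lam
    have h1 : Nat.factorial (p * (lam / p)) ∣ Nat.factorial lam :=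
      Nat.factorial_dvd_factorial (Nat.mul_div_le lam p)
    have h2 : padicValNat p (Nat.factorial (p * (lam / p))) ≤
        padicValNat p (Nat.factorial lam) :=
      (padicValNat_dvd_iff_le (Nat.factorial_pos _).ne').mp
        (dvd_trans pow_padicValNat_dvd h1)
    rw [padicValNat_factorial_mul] at h2
    omega
  have htend : Tendsto (fun lam : ℕ => ((lam / p : ℕ) : ℤ)) atTop atTop := by
    rw [tendsto_atTop]
    intro K
    filter_upwards [eventually_ge_atTop (p * K.toNat)] with n hn
    have hpos : 0 < p := hp.pos
    have : K.toNat ≤ n / p := (Nat.le_div_iff_mul_le hpos).mpr (by rwa [Nat.mul_comm] at hn)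
    omega
  refine tendsto_atTop_mono (fun lam => ?_) htend
  calc ((lam / p : ℕ) : ℤ) ≤ (padicValNat p (Nat.factorial lam) : ℤ) := by
        exact_mod_cast hfac lam
    _ ≤ padicValRat p (g lam) := hmain lam
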